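/- Let G be a connected graph with port set P = pG and signature ε = sG, and let r = #G + 1 − #nG, where #G is the number of edges and #nG the number of nodes of G. Then for every port assignment g ⊆ P whose cardinality is congruent to ε modulo 2, the number of semi-Kekulé states W of G with W|P = g is exactly 2^r. -/

import Mathlib

open scoped symmDiff

namespace Kekule

abbrev Node := ℕ
abbrev Graph := Finset (Finset Node)

/-- `G` is a graph: every edge is a 2-element set of nodes. -/
def IsGraph (G : Graph) : Prop := ∀ e ∈ G, e.card = 2

/-- The nodes of a graph: the elements of its edges. -/
def nodes (G : Graph) : Finset Node := G.biUnion id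

/-- The number of edges of `G` containing `v`. -/
def deg (G : Graph) (v : Node) : ℕ := (G.filter (fun e => v ∈ e)).card

/-- A port is a node contained in exactly one edge. -/
def ports (G : Graph) : Finset Node := (nodes G).filter (fun v => deg G v = 1)

/-- An internal node is a node that is not a port. -/
def internal (G : Graph) : Finset Node := (nodes G).filter (fun v => deg G v ≠ 1)

/-- A Kekulé state of `G`: a subgraph `W ⊆ G` such that every internal node
of `G` lies in exactly one edge of `W`. -/
def IsKekule (G W : Graph) : Prop := W ⊆ G ∧ ∀ v ∈ internal G, deg W v = 1

/-- A curve in `G`: a subgraph `C ⊆ G` such that every node of `C` that is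
internal in `G` lies in exactly two edges of `C`. -/
def IsCurve (G C : Graph) : Prop :=
  C ⊆ G ∧ ∀ v ∈ nodes C, v ∈ internal G → deg C v = 2

/-- `(C, W)` is an alternating curve in `G`: both are subgraphs of `G`,
`C` is a curve in `G`, and `W ∩ C` is a Kekulé state of `C`. -/
def IsAlternating (G C W : Graph) : Prop :=
  W ⊆ G ∧ IsCurve G C ∧ IsKekule C (W ∩ C)

/-- `W|P`: the set of ports in `P` that lie in some edge of `W`. -/
def rest (W : Graph) (P : Finset Node) : Finset Node := P ∩ nodes W

/-- The set of Kekulé port assignments of `G`. -/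
def KP (G : Graph) : Set (Finset Node) :=
  {g | ∃ W, IsKekule G W ∧ rest W (ports G) = g}

/-- A cell `K` over `P` is a Kekulé cell if it is the set of Kekulé port
assignments of some graph with port set `P`. -/
def IsKekuleCell (P : Finset Node) (K : Set (Finset Node)) : Prop :=
  ∃ G, IsGraph G ∧ ports G = P ∧ KP G = K

/-- A channel: a 2-element subset of `P`. -/
def IsChannel (P : Finset Node) (c : Finset Node) : Prop := c ⊆ P ∧ c.card = 2

/-- A port `p` is flexible for a cell `K`. -/
def Flexible (K : Set (Finset Node)) (p : Node) : Prop :=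
  ∃ g ∈ K, ∃ g' ∈ K, p ∈ g ∧ p ∉ g'

/-- Hamming distance between two port assignments. -/
def hdist (k k' : Finset Node) : ℕ := (k ∆ k').card

/-- The Hamming diameter of `K` equals `n`. -/
def HamDiamEq (K : Set (Finset Node)) (n : ℕ) : Prop :=
  (∃ k ∈ K, ∃ k' ∈ K, hdist k k' = n) ∧ ∀ k ∈ K, ∀ k' ∈ K, hdist k k' ≤ n

/-- `G` is connected: nonempty, and any two distinct nodes are joined by a walk. -/
def Connected (G : Graph) : Prop :=
  G.Nonempty ∧ ∀ p ∈ nodes G, ∀ q ∈ nodes G, p ≠ q →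
    ∃ (n : ℕ) (f : ℕ → Node), f 0 = p ∧ f n = q ∧
      ∀ i < n, ({f i, f (i + 1)} : Finset Node) ∈ G

/-- `C` is a simple path between `p` and `q`. -/
def IsSimplePath (C : Graph) (p q : Node) : Prop :=
  Connected C ∧ ports C = {p, q} ∧
    ∀ v ∈ nodes C, v ≠ p → v ≠ q → deg C v = 2

/-- A cycle: a connected graph all of whose nodes lie in exactly two edges. -/
def IsCycle (C : Graph) : Prop :=
  Connected C ∧ ∀ v ∈ nodes C, deg C v = 2

/-- A semi-Kekulé state of `G`: every internal node of `G` lies in an odd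
number of edges of `W`. -/
def IsSemiKekule (G W : Graph) : Prop :=
  W ⊆ G ∧ ∀ v ∈ internal G, deg W v % 2 = 1

/-- The signature of `G`. -/
def sig (G : Graph) : ℕ := (internal G).card % 2

/-- `G` is omniconjugated. -/
def Omniconjugated (G : Graph) : Prop :=
  2 ≤ (ports G).card ∧ KP G = {g | g ⊆ ports G ∧ g.card % 2 = sig G}

instance : Std.Commutative (α := Finset Node) (· ∆ ·) := ⟨symmDiff_comm⟩
instance : Std.Associative (α := Finset Node) (· ∆ ·) := ⟨symmDiff_assoc⟩

/-- The `⊕`-sum of a finite family of port assignments. -/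
def xorSum (D : Finset (Finset Node)) : Finset Node := D.fold (· ∆ ·) ∅ id

-- linear algebra setup
def phi (G : Graph) : ({e // e ∈ G} → ZMod 2) →ₗ[ZMod 2] ({v // v ∈ nodes G} → ZMod 2) where
  toFun x v := ∑ e : {e // e ∈ G}, if (v : Node) ∈ (e : Finset Node) then x e else 0
  map_add' x y := by
    funext v
    rw [Pi.add_apply, ← Finset.sum_add_distrib]
    exact Finset.sum_congr rfl fun e _ => by split <;> simp
  map_smul' c x := by
    funext v
    simp only [RingHom.id_apply, Pi.smul_apply, Finset.smul_sum]
    exact Finset.sum_congr rfl fun e _ => by split <;> simp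

def sgm (G : Graph) : ({v // v ∈ nodes G} → ZMod 2) →ₗ[ZMod 2] ZMod 2 where
  toFun y := ∑ v, y v
  map_add' x y := by simp [Finset.sum_add_distrib]
  map_smul' c x := by simp [Finset.mul_sum]

lemma sgm_apply (G : Graph) (y : {v // v ∈ nodes G} → ZMod 2) : sgm G y = ∑ v, y v := rfl

lemma zmod2_cases (a : ZMod 2) : a = 0 ∨ a = 1 := by revert a; decide
lemma zmod2_add_self (a : ZMod 2) : a + a = 0 := by revert a; decide

lemma mem_nodes {W : Graph} {v : Node} : v ∈ nodes W ↔ ∃ e ∈ W, v ∈ e := by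
  simp [nodes]

lemma deg_eq_zero_iff {W : Graph} {v : Node} : deg W v = 0 ↔ v ∉ nodes W := by
  simp [deg, Finset.card_eq_zero, Finset.filter_eq_empty_iff, mem_nodes]

lemma deg_mono {W G : Graph} (h : W ⊆ G) (v : Node) : deg W v ≤ deg G v :=
  Finset.card_le_card (Finset.filter_subset_filter _ h)

lemma edge_subset_nodes {G : Graph} {e : Finset Node} (he : e ∈ G) : e ⊆ nodes G :=
  fun v hv => mem_nodes.2 ⟨e, he, hv⟩

-- phi applied to the indicator of W computes degrees mod 2
lemma phi_indicator {G W : Graph} (h : W ⊆ G) (v : {v // v ∈ nodes G}) :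
    phi G (fun e => if (e : Finset Node) ∈ W then 1 else 0) v = (deg W (v : Node) : ZMod 2) := by
  classical
  have h1 : phi G (fun e => if (e : Finset Node) ∈ W then 1 else 0) v
      = ∑ e ∈ G.attach, (if ((v : Node) ∈ (e : Finset Node) ∧ (e : Finset Node) ∈ W) then (1 : ZMod 2) else 0) := by
    simp only [phi, LinearMap.coe_mk, AddHom.coe_mk]
    rw [show (Finset.univ : Finset {e // e ∈ G}) = G.attach from rfl]
    exact Finset.sum_congr rfl fun e _ => by
      by_cases h : (v : Node) ∈ (e : Finset Node) <;> by_cases h' : (e : Finset Node) ∈ W <;> simp [h, h']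
  rw [h1, Finset.sum_attach G (fun e => (if ((v : Node) ∈ e ∧ e ∈ W) then (1 : ZMod 2) else 0)),
    Finset.sum_boole]
  have h2 : G.filter (fun e => (v : Node) ∈ e ∧ e ∈ W) = W.filter (fun e => (v : Node) ∈ e) := by
    ext e
    simp only [Finset.mem_filter]
    exact ⟨fun ⟨_, h2, h3⟩ => ⟨h3, h2⟩, fun ⟨h1', h2⟩ => ⟨h h1', h2, h1'⟩⟩
  rw [h2, deg]


lemma natCast_zmod2_eq_one {n : ℕ} : (n : ZMod 2) = 1 ↔ n % 2 = 1 := by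
  constructor
  · intro h
    rcases Nat.mod_two_eq_zero_or_one n with h2 | h2
    · exfalso
      rw [← ZMod.natCast_mod, h2] at h
      simpa using h
    · exact h2
  · intro h
    rw [← ZMod.natCast_mod, h]
    simp

def bvec (G : Graph) (g : Finset Node) : {v // v ∈ nodes G} → ZMod 2 :=
  fun v => if (v : Node) ∈ internal G then 1 else if (v : Node) ∈ g then 1 else 0

lemma internal_iff {G : Graph} {v : Node} (hv : v ∈ nodes G) :
    v ∈ internal G ↔ v ∉ ports G := by
  simp [internal, ports, hv]

lemma port_deg {G : Graph} {v : Node} (hv : v ∈ ports G) : deg G v = 1 :=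
  (Finset.mem_filter.1 hv).2

lemma cond_iff {G W : Graph} (hW : W ⊆ G) {g : Finset Node} (hg : g ⊆ ports G) :
    ((∀ v ∈ internal G, deg W v % 2 = 1) ∧ rest W (ports G) = g) ↔
      phi G (fun e => if (e : Finset Node) ∈ W then 1 else 0) = bvec G g := by
  constructor
  · rintro ⟨hint, hrest⟩
    funext v
    rw [phi_indicator hW, bvec]
    by_cases h : (v : Node) ∈ internal G
    · rw [if_pos h, natCast_zmod2_eq_one]
      exact hint _ h
    · rw [if_neg h]
      have hp : (v : Node) ∈ ports G := by
        by_contra hp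
        exact h ((internal_iff v.2).2 hp)
      have hle : deg W (v : Node) ≤ 1 := by
        rw [← port_deg hp]; exact deg_mono hW _
      by_cases hvg : (v : Node) ∈ g
      · rw [if_pos hvg]
        have : (v : Node) ∈ nodes W := by
          have : (v : Node) ∈ rest W (ports G) := hrest ▸ hvg
          exact (Finset.mem_inter.1 this).2
        have hne : deg W (v : Node) ≠ 0 := fun h0 => (deg_eq_zero_iff.1 h0) this
        have : deg W (v : Node) = 1 := by omega
        rw [this]; simp
      · rw [if_neg hvg]
        have : (v : Node) ∉ nodes W := by
          intro hmem
          exact hvg (hrest ▸ (Finset.mem_inter.2 ⟨hp, hmem⟩))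
        rw [deg_eq_zero_iff.2 this]; simp
  · intro hphi
    constructor
    · intro v hv
      have hvn : v ∈ nodes G := (Finset.mem_filter.1 hv).1
      have := congrFun hphi ⟨v, hvn⟩
      rw [phi_indicator hW, bvec, if_pos hv] at this
      exact natCast_zmod2_eq_one.1 this
    · ext p
      simp only [rest, Finset.mem_inter]
      constructor
      · rintro ⟨hp, hpw⟩
        have hvn : p ∈ nodes G := (Finset.mem_filter.1 hp).1
        have hni : p ∉ internal G := fun h => ((internal_iff hvn).1 h) hp
        have := congrFun hphi ⟨p, hvn⟩
        rw [phi_indicator hW, bvec, if_neg hni] at this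
        by_contra hpg
        rw [if_neg hpg] at this
        have hne : deg W p ≠ 0 := fun h0 => (deg_eq_zero_iff.1 h0) hpw
        have hle : deg W p ≤ 1 := by
          rw [← port_deg hp]; exact deg_mono hW _
        have h1 : deg W p = 1 := by omega
        rw [h1] at this
        simpa using this
      · intro hpg
        have hp : p ∈ ports G := hg hpg
        refine ⟨hp, ?_⟩
        have hvn : p ∈ nodes G := (Finset.mem_filter.1 hp).1
        have hni : p ∉ internal G := fun h => ((internal_iff hvn).1 h) hp
        have := congrFun hphi ⟨p, hvn⟩
        rw [phi_indicator hW, bvec, if_neg hni, if_pos hpg] at this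
        by_contra hpw
        rw [deg_eq_zero_iff.2 hpw] at this
        simpa using this


def toW (G : Graph) (x : {e // e ∈ G} → ZMod 2) : Graph :=
  (G.attach.filter (fun e => x e = 1)).image Subtype.val

lemma toW_subset (G : Graph) (x : {e // e ∈ G} → ZMod 2) : toW G x ⊆ G := by
  intro e he
  obtain ⟨f, _, rfl⟩ := Finset.mem_image.1 he
  exact f.2

lemma toX_toW (G : Graph) (x : {e // e ∈ G} → ZMod 2) :
    (fun e : {e // e ∈ G} => if (e : Finset Node) ∈ toW G x then (1 : ZMod 2) else 0) = x := by
  funext e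
  by_cases h : x e = 1
  · rw [if_pos, h]
    exact Finset.mem_image.2 ⟨e, Finset.mem_filter.2 ⟨Finset.mem_attach _ _, h⟩, rfl⟩
  · rcases zmod2_cases (x e) with h0 | h1
    · rw [if_neg, h0]
      intro hmem
      obtain ⟨f, hf, hfe⟩ := Finset.mem_image.1 hmem
      exact h (Subtype.ext hfe ▸ (Finset.mem_filter.1 hf).2)
    · exact absurd h1 h

lemma toX_inj {G W W' : Graph} (hW : W ⊆ G) (hW' : W' ⊆ G)
    (h : (fun e : {e // e ∈ G} => if (e : Finset Node) ∈ W then (1 : ZMod 2) else 0)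
       = (fun e : {e // e ∈ G} => if (e : Finset Node) ∈ W' then (1 : ZMod 2) else 0)) :
    W = W' := by
  ext e
  constructor
  · intro he
    have := congrFun h ⟨e, hW he⟩
    simp only [he, if_true] at this
    by_contra he'
    rw [if_neg he'] at this
    simp at this
  · intro he
    have := congrFun h ⟨e, hW' he⟩
    simp only [he, if_true] at this
    by_contra he'
    rw [if_neg he'] at this
    simp at this

noncomputable def stateEquiv (G : Graph) (g : Finset Node) (hg : g ⊆ ports G) :
    {W : Graph // IsSemiKekule G W ∧ rest W (ports G) = g} ≃
      {x : {e // e ∈ G} → ZMod 2 // phi G x = bvec G g} where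
  toFun W := ⟨fun e => if (e : Finset Node) ∈ W.1 then 1 else 0,
    (cond_iff W.2.1.1 hg).1 ⟨W.2.1.2, W.2.2⟩⟩
  invFun x := ⟨toW G x.1, by
    have hsub := toW_subset G x.1
    have hcond := (cond_iff hsub hg).2 (by rw [toX_toW]; exact x.2)
    exact ⟨⟨hsub, hcond.1⟩, hcond.2⟩⟩
  left_inv W := Subtype.ext (toX_inj (toW_subset G _) W.2.1.1
    (by rw [toX_toW]))
  right_inv x := Subtype.ext (toX_toW G x.1)


lemma card_dom {M N : Type*} [AddCommGroup M] [AddCommGroup N]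
    [Module (ZMod 2) M] [Module (ZMod 2) N] (f : M →ₗ[ZMod 2] N) :
    Nat.card M = Nat.card (LinearMap.range f) * Nat.card (LinearMap.ker f) := by
  classical
  have hex : ∀ y : LinearMap.range f, ∃ x, f x = (y : N) := fun y => y.2
  choose s hs using hex
  have e : M ≃ (LinearMap.range f) × (LinearMap.ker f) :=
    { toFun := fun x => (⟨f x, ⟨x, rfl⟩⟩, ⟨x - s ⟨f x, ⟨x, rfl⟩⟩, by
        rw [LinearMap.mem_ker, map_sub, hs, sub_self]⟩)
      invFun := fun p => s p.1 + p.2.1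
      left_inv := fun x => by
        simp only
        rw [add_comm, sub_add_cancel]
      right_inv := fun p => by
        obtain ⟨y, k⟩ := p
        have hfk : f (k : M) = 0 := k.2
        have hfy : f (s y + (k : M)) = (y : N) := by rw [map_add, hs, hfk, add_zero]
        have h1 : (⟨f (s y + (k : M)), ⟨s y + (k : M), rfl⟩⟩ : LinearMap.range f) = y :=
          Subtype.ext hfy
        simp only
        rw [Prod.mk.injEq]
        refine ⟨h1, Subtype.ext ?_⟩
        show (s y + (k : M)) - s ⟨f (s y + (k : M)), ⟨s y + (k : M), rfl⟩⟩ = (k : M)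
        rw [h1, add_sub_cancel_left] }
  rw [Nat.card_congr e, Nat.card_prod]

lemma card_fiber {M N : Type*} [AddCommGroup M] [AddCommGroup N]
    [Module (ZMod 2) M] [Module (ZMod 2) N] (f : M →ₗ[ZMod 2] N) (b : N)
    (x₀ : M) (hx₀ : f x₀ = b) :
    Nat.card {x : M // f x = b} = Nat.card (LinearMap.ker f) := by
  apply Nat.card_congr
  refine ⟨fun x => ⟨x.1 - x₀, by rw [LinearMap.mem_ker, map_sub, x.2, hx₀, sub_self]⟩,
    fun k => ⟨k.1 + x₀, by rw [map_add, show f k.1 = 0 from k.2, hx₀, zero_add]⟩, ?_, ?_⟩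
  · intro x
    refine Subtype.ext ?_
    show ((x : M) - x₀) + x₀ = (x : M)
    rw [sub_add_cancel]
  · intro k
    refine Subtype.ext ?_
    show ((k : M) + x₀) - x₀ = (k : M)
    rw [add_sub_cancel_right]


def dlt (v : Node) (G : Graph) : {w // w ∈ nodes G} → ZMod 2 :=
  fun w => if (w : Node) = v then 1 else 0

lemma zmod2_tri (x y z : ZMod 2) : x + z = (x + y) + (y + z) := by revert x y z; decide

lemma sgm_phi {G : Graph} (hG : IsGraph G) (x : {e // e ∈ G} → ZMod 2) :
    sgm G (phi G x) = 0 := by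
  simp only [sgm_apply, phi, LinearMap.coe_mk, AddHom.coe_mk]
  rw [Finset.sum_comm]
  apply Finset.sum_eq_zero
  intro e _
  rw [show (Finset.univ : Finset {v // v ∈ nodes G}) = (nodes G).attach from rfl]
  rw [Finset.sum_attach (nodes G) (fun v => if v ∈ (e : Finset Node) then x e else 0)]
  rw [← Finset.sum_filter]
  have hfe : (nodes G).filter (fun v => v ∈ (e : Finset Node)) = (e : Finset Node) := by
    ext v
    simp only [Finset.mem_filter]
    exact ⟨fun h => h.2, fun h => ⟨edge_subset_nodes e.2 h, h⟩⟩
  rw [hfe, Finset.sum_const, hG _ e.2, two_smul]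
  exact zmod2_add_self _

lemma ne_of_pair {p q : Node} (h : ({p, q} : Finset Node).card = 2) : p ≠ q := by
  intro hpq
  rw [hpq, Finset.insert_eq_self.2 (Finset.mem_singleton_self q), Finset.card_singleton] at h
  omega

lemma edge_in_range {G : Graph} (hG : IsGraph G) {p q : Node}
    (he : ({p, q} : Finset Node) ∈ G) :
    dlt p G + dlt q G ∈ LinearMap.range (phi G) := by
  refine ⟨fun f => if (f : Finset Node) = {p, q} then 1 else 0, ?_⟩
  have hpq : p ≠ q := ne_of_pair (hG _ he)
  funext v
  simp only [phi, LinearMap.coe_mk, AddHom.coe_mk]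
  rw [Finset.sum_eq_single (⟨({p, q} : Finset Node), he⟩ : {e // e ∈ G})]
  · by_cases h1 : (v : Node) = p
    · simp [dlt, h1, hpq]
    · by_cases h2 : (v : Node) = q <;> simp [dlt, h1, h2, Ne.symm hpq]
  · intro f _ hne
    have hf : (f : Finset Node) ≠ {p, q} := fun h => hne (Subtype.ext h)
    simp [hf]
  · intro h
    exact absurd (Finset.mem_univ _) h

lemma walk_range {G : Graph} (hG : IsGraph G) (f : ℕ → Node) :
    ∀ n : ℕ, (∀ i < n, ({f i, f (i + 1)} : Finset Node) ∈ G) →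
      dlt (f 0) G + dlt (f n) G ∈ LinearMap.range (phi G) := by
  intro n
  induction n with
  | zero =>
    intro _
    rw [show dlt (f 0) G + dlt (f 0) G = 0 from funext fun w => zmod2_add_self _]
    exact zero_mem _
  | succ n ih =>
    intro hf
    have h1 := ih (fun i hi => hf i (by omega))
    have h2 : dlt (f n) G + dlt (f (n + 1)) G ∈ LinearMap.range (phi G) :=
      edge_in_range hG (hf n (by omega))
    have key : dlt (f 0) G + dlt (f (n + 1)) G
        = (dlt (f 0) G + dlt (f n) G) + (dlt (f n) G + dlt (f (n + 1)) G) := by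
      funext w
      exact zmod2_tri _ _ _
    rw [key]
    exact add_mem h1 h2

lemma sum_zero_mem_range {G : Graph} (hG : IsGraph G) (hconn : Connected G)
    (y : {v // v ∈ nodes G} → ZMod 2) (hy : sgm G y = 0) :
    y ∈ LinearMap.range (phi G) := by
  obtain ⟨e₀, he₀⟩ := hconn.1
  have hne : (e₀ : Finset Node).Nonempty := by
    rw [← Finset.card_pos, hG _ he₀]
    omega
  obtain ⟨v₀, hv₀e⟩ := hne
  have hv₀ : v₀ ∈ nodes G := edge_subset_nodes he₀ hv₀e
  have hδ : ∀ v ∈ nodes G, dlt v G + dlt v₀ G ∈ LinearMap.range (phi G) := by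
    intro v hv
    by_cases hvv : v = v₀
    · rw [hvv, show dlt v₀ G + dlt v₀ G = 0 from funext fun w => zmod2_add_self _]
      exact zero_mem _
    · obtain ⟨n, f2, hf0, hfn, hfe⟩ := hconn.2 v hv v₀ hv₀ hvv
      have := walk_range hG f2 n hfe
      rwa [hf0, hfn] at this
  have hrep : y = ∑ v : {v // v ∈ nodes G}, y v • (dlt (v : Node) G + dlt v₀ G) := by
    funext w
    rw [Finset.sum_apply]
    simp only [Pi.smul_apply, Pi.add_apply, smul_eq_mul, mul_add]
    rw [Finset.sum_add_distrib]
    have e1 : ∑ v : {v // v ∈ nodes G}, y v * dlt (v : Node) G w = y w := by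
      have hterm : ∀ v : {v // v ∈ nodes G},
          y v * dlt (v : Node) G w = if w = v then y v else 0 := by
        intro v
        simp only [dlt]
        by_cases h : w = v
        · rw [if_pos h, if_pos (by rw [h]), mul_one]
        · rw [if_neg h, if_neg (fun hc => h (Subtype.ext hc)), mul_zero]
      rw [Finset.sum_congr rfl (fun v _ => hterm v)]
      simp
    have e2 : ∑ v : {v // v ∈ nodes G}, y v * dlt v₀ G w = 0 := by
      rw [← Finset.sum_mul]
      have hy' : (∑ v : {v // v ∈ nodes G}, y v) = 0 := hy
      rw [hy', zero_mul]
    rw [e1, e2, add_zero]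
  rw [hrep]
  exact Submodule.sum_mem _ fun v _ => Submodule.smul_mem _ _ (hδ v.1 v.2)

lemma range_phi_eq {G : Graph} (hG : IsGraph G) (hconn : Connected G) :
    LinearMap.range (phi G) = LinearMap.ker (sgm G) := by
  apply le_antisymm
  · rintro y ⟨x, rfl⟩
    exact LinearMap.mem_ker.2 (sgm_phi hG x)
  · intro y hy
    exact sum_zero_mem_range hG hconn y (LinearMap.mem_ker.1 hy)


lemma sgm_bvec {G : Graph} {g : Finset Node} (hg : g ⊆ ports G)
    (hpar : g.card % 2 = sig G) : sgm G (bvec G g) = 0 := by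
  classical
  simp only [sgm_apply, LinearMap.coe_mk, AddHom.coe_mk, bvec]
  rw [show (Finset.univ : Finset {v // v ∈ nodes G}) = (nodes G).attach from rfl]
  rw [Finset.sum_attach (nodes G)
    (fun v => if v ∈ internal G then (1 : ZMod 2) else if v ∈ g then 1 else 0)]
  rw [← Finset.sum_filter_add_sum_filter_not (nodes G) (fun v => deg G v ≠ 1)]
  have h1 : ∑ v ∈ (nodes G).filter (fun v => deg G v ≠ 1),
      (if v ∈ internal G then (1 : ZMod 2) else if v ∈ g then 1 else 0)
      = ((internal G).card : ZMod 2) := by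
    rw [show (nodes G).filter (fun v => deg G v ≠ 1) = internal G from rfl]
    rw [Finset.sum_congr rfl (fun v hv => if_pos hv)]
    simp
  have hport : (nodes G).filter (fun v => ¬deg G v ≠ 1) = ports G := by
    apply Finset.filter_congr
    intro v _
    simp
  have h2 : ∑ v ∈ (nodes G).filter (fun v => ¬deg G v ≠ 1),
      (if v ∈ internal G then (1 : ZMod 2) else if v ∈ g then 1 else 0)
      = (g.card : ZMod 2) := by
    rw [hport]
    have hstep : ∀ v ∈ ports G,
        (if v ∈ internal G then (1 : ZMod 2) else if v ∈ g then 1 else 0)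
          = if v ∈ g then 1 else 0 := by
      intro v hv
      rw [if_neg]
      intro hint
      exact (internal_iff (Finset.mem_filter.1 hv).1).1 hint hv
    rw [Finset.sum_congr rfl hstep, ← Finset.sum_filter]
    have : (ports G).filter (fun v => v ∈ g) = g := by
      ext v
      simp only [Finset.mem_filter]
      exact ⟨fun h => h.2, fun h => ⟨hg h, h⟩⟩
    rw [this, Finset.sum_const, nsmul_eq_mul, mul_one]
  rw [h1, h2, ← ZMod.natCast_mod (internal G).card 2, ← ZMod.natCast_mod g.card 2,
    hpar, sig]
  exact zmod2_add_self _

lemma card_ker_sgm {G : Graph} (hG : IsGraph G) (hconn : Connected G) :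
    2 ^ (nodes G).card = 2 * Nat.card (LinearMap.ker (sgm G)) := by
  classical
  have hdom : Nat.card ({v // v ∈ nodes G} → ZMod 2) = 2 ^ (nodes G).card := by
    rw [Nat.card_eq_fintype_card, Fintype.card_fun, ZMod.card, Fintype.card_coe]
  -- surjectivity of sgm
  obtain ⟨e₀, he₀⟩ := hconn.1
  have hne : (e₀ : Finset Node).Nonempty := by
    rw [← Finset.card_pos, hG _ he₀]; omega
  obtain ⟨v₀, hv₀e⟩ := hne
  have hv₀ : v₀ ∈ nodes G := edge_subset_nodes he₀ hv₀e
  have hdelta : sgm G (dlt v₀ G) = 1 := by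
    simp only [sgm_apply, LinearMap.coe_mk, AddHom.coe_mk, dlt]
    rw [show (Finset.univ : Finset {v // v ∈ nodes G}) = (nodes G).attach from rfl]
    rw [Finset.sum_attach (nodes G) (fun v => if v = v₀ then (1 : ZMod 2) else 0)]
    rw [Finset.sum_ite_eq' (nodes G) v₀ (fun _ => (1 : ZMod 2))]
    rw [if_pos hv₀]
  have hsurj : Function.Surjective (sgm G) := by
    intro c
    exact ⟨c • dlt v₀ G, by rw [map_smul, hdelta, smul_eq_mul, mul_one]⟩
  have hrange : Nat.card (LinearMap.range (sgm G)) = 2 := by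
    rw [LinearMap.range_eq_top.2 hsurj]
    rw [Nat.card_congr (Submodule.topEquiv (R := ZMod 2)).toEquiv]
    rw [Nat.card_eq_fintype_card, ZMod.card]
  have := card_dom (sgm G)
  rw [hdom, hrange] at this
  exact this

/-- For a connected graph `G` with `r = #G + 1 − #nG`, every
port assignment of the right parity is realized by exactly `2 ^ r`
semi-Kekulé states. -/
theorem statement14 (G : Graph) (hG : IsGraph G) (hconn : Connected G)
    (r : ℕ) (hr : r = G.card + 1 - (nodes G).card)
    (g : Finset Node) (hg : g ⊆ ports G) (hpar : g.card % 2 = sig G) :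
    Nat.card {W : Graph // IsSemiKekule G W ∧ rest W (ports G) = g} = 2 ^ r := by
  classical
  have hbmem : bvec G g ∈ LinearMap.range (phi G) := by
    rw [range_phi_eq hG hconn]
    exact LinearMap.mem_ker.2 (sgm_bvec hg hpar)
  obtain ⟨x₀, hx₀⟩ := hbmem
  have hcount : Nat.card {W : Graph // IsSemiKekule G W ∧ rest W (ports G) = g}
      = Nat.card (LinearMap.ker (phi G)) := by
    rw [Nat.card_congr (stateEquiv G g hg)]
    exact card_fiber (phi G) (bvec G g) x₀ hx₀
  have hdom : Nat.card ({e // e ∈ G} → ZMod 2) = 2 ^ G.card := by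
    rw [Nat.card_eq_fintype_card, Fintype.card_fun, ZMod.card, Fintype.card_coe]
  have h1 := card_dom (phi G)
  rw [hdom, range_phi_eq hG hconn] at h1
  have h2 := card_ker_sgm hG hconn
  set K := Nat.card (LinearMap.ker (phi G)) with hK
  set L := Nat.card (LinearMap.ker (sgm G)) with hL
  -- 2 ^ (G.card + 1) = 2 ^ (nodes G).card * K
  have h3 : 2 ^ (G.card + 1) = 2 ^ (nodes G).card * K := by
    rw [pow_succ, h2, h1]
    ring
  have hKpos : 0 < K := Nat.card_pos
  have hle : (nodes G).card ≤ G.card + 1 := by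
    have hdvd : 2 ^ (nodes G).card ∣ 2 ^ (G.card + 1) := ⟨K, h3⟩
    exact (Nat.pow_dvd_pow_iff_le_right one_lt_two).1 hdvd
  have hKval : K = 2 ^ r := by
    have : 2 ^ (nodes G).card * K = 2 ^ (nodes G).card * 2 ^ r := by
      rw [← h3, ← pow_add]
      congr 1
      omega
    exact Nat.eq_of_mul_eq_mul_left (Nat.pow_pos two_pos) this
  rw [hcount, hKval]

end Kekule
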